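/- For every m ∈ ℕ, the function s(x,y,q) = e^{−q²/2}(x+iy)^m satisfies the symplectic Dirac equation D_s s = 0, where D_s = i q ∂_y − ∂_x ∂_q. -/

import Mathlib

noncomputable section

def px (f : ℝ → ℝ → ℝ → ℂ) : ℝ → ℝ → ℝ → ℂ := fun x y q => deriv (fun t => f t y q) x
def py (f : ℝ → ℝ → ℝ → ℂ) : ℝ → ℝ → ℝ → ℂ := fun x y q => deriv (fun t => f x t q) y
def pq (f : ℝ → ℝ → ℝ → ℂ) : ℝ → ℝ → ℝ → ℂ := fun x y q => deriv (fun t => f x y t) q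

/-- X_s = y ∂_q + i x q -/
def Xs (f : ℝ → ℝ → ℝ → ℂ) : ℝ → ℝ → ℝ → ℂ :=
  fun x y q => (y : ℂ) * pq f x y q + Complex.I * x * q * f x y q

/-- D_s = i q ∂_y − ∂_x ∂_q -/
def Ds (f : ℝ → ℝ → ℝ → ℂ) : ℝ → ℝ → ℝ → ℂ :=
  fun x y q => Complex.I * q * py f x y q - px (pq f) x y q

/-- T_s = ∂_x − q ∂_q ∂_x + i q² ∂_y -/
def Ts (f : ℝ → ℝ → ℝ → ℂ) : ℝ → ℝ → ℝ → ℂ :=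
  fun x y q => px f x y q - (q : ℂ) * pq (px f) x y q + Complex.I * q ^ 2 * py f x y q

lemma hasDerivAt_E (q : ℝ) :
    HasDerivAt (fun t : ℝ => Complex.exp (-(t : ℂ) ^ 2 / 2))
      (-(q : ℂ) * Complex.exp (-(q : ℂ) ^ 2 / 2)) q := by
  have h1 : HasDerivAt (fun z : ℂ => -z ^ 2 / 2) (-(q : ℂ)) (q : ℂ) := by
    have := ((hasDerivAt_pow 2 (q : ℂ)).neg).div_const 2
    refine this.congr_deriv ?_
    ring
  have h : HasDerivAt (fun z : ℂ => Complex.exp (-z ^ 2 / 2))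
      (Complex.exp (-(q : ℂ) ^ 2 / 2) * (-(q : ℂ))) (q : ℂ) := by
    simpa using h1.cexp
  simpa [mul_comm] using h.comp_ofReal

theorem Ds_annihilates_exp_zpow (m : ℕ) (x y q : ℝ) :
    Ds (fun x y q => Complex.exp (-(q : ℂ) ^ 2 / 2) * ((x : ℂ) + Complex.I * y) ^ m)
      x y q = 0 := by
  have hpq : (pq fun x y q => Complex.exp (-(q : ℂ) ^ 2 / 2) * ((x : ℂ) + Complex.I * y) ^ m)
      = fun (x y q : ℝ) => (-(q : ℂ) * Complex.exp (-(q : ℂ) ^ 2 / 2)) * ((x : ℂ) + Complex.I * y) ^ m := by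
    funext a b c
    exact ((hasDerivAt_E c).mul_const (((a : ℂ) + Complex.I * b) ^ m)).deriv
  have hpy : py (fun x y q => Complex.exp (-(q : ℂ) ^ 2 / 2) * ((x : ℂ) + Complex.I * y) ^ m) x y q
      = Complex.exp (-(q : ℂ) ^ 2 / 2) * ((m : ℂ) * ((x : ℂ) + Complex.I * y) ^ (m - 1) * Complex.I) := by
    have hb : HasDerivAt (fun z : ℂ => (x : ℂ) + Complex.I * z) Complex.I (y : ℂ) := by
      simpa using ((hasDerivAt_id (y : ℂ)).const_mul Complex.I).const_add (x : ℂ)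
    have hz := (hb.pow m).const_mul (Complex.exp (-(q : ℂ) ^ 2 / 2))
    exact (hz.comp_ofReal).deriv
  have hpxpq : px (pq fun x y q => Complex.exp (-(q : ℂ) ^ 2 / 2) * ((x : ℂ) + Complex.I * y) ^ m) x y q
      = (-(q : ℂ) * Complex.exp (-(q : ℂ) ^ 2 / 2)) * ((m : ℂ) * ((x : ℂ) + Complex.I * y) ^ (m - 1)) := by
    rw [hpq]
    have hb : HasDerivAt (fun z : ℂ => z + Complex.I * (y : ℂ)) 1 (x : ℂ) := by
      simpa using (hasDerivAt_id (x : ℂ)).add_const (Complex.I * (y : ℂ))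
    have hz := (hb.pow m).const_mul (-(q : ℂ) * Complex.exp (-(q : ℂ) ^ 2 / 2))
    have h2 := (hz.comp_ofReal).deriv
    simp only [px]
    simp only [Pi.pow_apply] at h2
    rw [h2]; ring
  simp only [Ds, hpy, hpxpq]
  ring_nf
  rw [Complex.I_sq]
  ring
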